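/- Let A be a symmetric real n×n matrix (n ≥ 1). Then there exists a unique real number α such that for every vector x ∈ ℝⁿ with nonnegative entries summing to 1, one has min_{1≤i≤n} (Ax)_i ≤ α ≤ max_{1≤i≤n} (Ax)_i. -/

import Mathlib

open Pointwise

private lemma mm_sum_swap {n : ℕ} (A : Matrix (Fin n) (Fin n) ℝ) (hA : A.IsSymm)
    (x y : Fin n → ℝ) :
    ∑ j, y j * A.mulVec x j = ∑ j, x j * A.mulVec y j := by
  simp only [Matrix.mulVec, dotProduct, Finset.mul_sum]
  rw [Finset.sum_comm]
  refine Finset.sum_congr rfl fun k _ => Finset.sum_congr rfl fun j _ => ?_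
  rw [hA.apply]
  ring

/-- Weak duality for a symmetric matrix game. -/
private lemma mm_weak {n : ℕ} (hn : 1 ≤ n) (A : Matrix (Fin n) (Fin n) ℝ) (hA : A.IsSymm)
    (x y : Fin n → ℝ) (hx1 : ∀ i, 0 ≤ x i) (hx2 : (∑ i, x i) = 1)
    (hy1 : ∀ i, 0 ≤ y i) (hy2 : (∑ i, y i) = 1) :
    (⨅ i, A.mulVec x i) ≤ ⨆ i, A.mulVec y i := by
  haveI : Nonempty (Fin n) := Fin.pos_iff_nonempty.mp hn
  have h1 : (⨅ i, A.mulVec x i) ≤ ∑ j, y j * A.mulVec x j := by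
    calc (⨅ i, A.mulVec x i) = ∑ j, y j * ⨅ i, A.mulVec x i := by
          rw [← Finset.sum_mul, hy2, one_mul]
      _ ≤ ∑ j, y j * A.mulVec x j := Finset.sum_le_sum fun j _ =>
          mul_le_mul_of_nonneg_left (ciInf_le (Finite.bddBelow_range _) j) (hy1 j)
  have h2 : ∑ j, x j * A.mulVec y j ≤ ⨆ i, A.mulVec y i := by
    calc ∑ j, x j * A.mulVec y j ≤ ∑ j, x j * ⨆ i, A.mulVec y i :=
          Finset.sum_le_sum fun j _ =>
            mul_le_mul_of_nonneg_left (le_ciSup (Finite.bddAbove_range _) j) (hx1 j)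
      _ = ⨆ i, A.mulVec y i := by rw [← Finset.sum_mul, hx2, one_mul]
  have h3 := mm_sum_swap A hA x y
  linarith

/-- Separation step: if `max_i (Bx)_i > 0` for every probability vector `x`, then some
probability vector `y` satisfies `(By)_k > 0` for all `k`. -/
private lemma mm_sep {n : ℕ} (hn : 1 ≤ n) (B : Matrix (Fin n) (Fin n) ℝ) (hB : B.IsSymm)
    (h : ∀ x : Fin n → ℝ, (∀ i, 0 ≤ x i) → (∑ i, x i) = 1 → 0 < ⨆ i, B.mulVec x i) :
    ∃ y : Fin n → ℝ, (∀ i, 0 ≤ y i) ∧ (∑ i, y i) = 1 ∧ ∀ k, 0 < B.mulVec y k := by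
  haveI : Nonempty (Fin n) := Fin.pos_iff_nonempty.mp hn
  set K : Set (Fin n → ℝ) := ⇑B.mulVecLin '' stdSimplex ℝ (Fin n) with hKdef
  set P : Set (Fin n → ℝ) := {s | ∀ i, 0 ≤ s i} with hPdef
  have hPpi : P = Set.pi Set.univ fun _ => Set.Ici (0 : ℝ) := by
    ext s; simp [hPdef, Set.mem_pi, Pi.le_def]
  have hKcomp : IsCompact K :=
    (isCompact_stdSimplex ℝ _).image B.mulVecLin.continuous_of_finiteDimensional
  have hPcl : IsClosed P := by
    rw [hPpi]; exact isClosed_set_pi fun i _ => isClosed_Ici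
  have hKconv : Convex ℝ K := (convex_stdSimplex ℝ _).linear_image B.mulVecLin
  have hPconv : Convex ℝ P := by
    rw [hPpi]; exact convex_pi fun i _ => convex_Ici 0
  have hCcl : IsClosed (K + P) := hPcl.add_left_of_isCompact hKcomp
  have hCconv : Convex ℝ (K + P) := hKconv.add hPconv
  have h0 : (0 : Fin n → ℝ) ∉ K + P := by
    rintro ⟨a, ⟨x, hx, rfl⟩, s, hs, hsum⟩
    have hle : ∀ i, B.mulVec x i ≤ 0 := by
      intro i
      have := congrFun hsum i
      simp only [Pi.add_apply, Pi.zero_apply, Matrix.mulVecLin_apply] at this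
      have hsi := hs i
      linarith
    have hsup : (⨆ i, B.mulVec x i) ≤ 0 := ciSup_le hle
    have := h x hx.1 hx.2
    linarith
  obtain ⟨f, u, hfu, hC⟩ := geometric_hahn_banach_point_closed hCconv hCcl h0
  rw [map_zero] at hfu
  set y : Fin n → ℝ := fun k => f (Pi.single k 1) with hydef
  have hf : ∀ z : Fin n → ℝ, f z = ∑ k, z k * y k := by
    intro z
    have hz : z = ∑ k, z k • (Pi.single k (1 : ℝ) : Fin n → ℝ) := by
      funext j
      simp [Finset.sum_apply, Pi.single_apply, mul_ite]
    conv_lhs => rw [hz]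
    rw [map_sum]
    simp [hydef, smul_eq_mul]
  have hmemC : ∀ x ∈ stdSimplex ℝ (Fin n), ∀ s ∈ P, B.mulVecLin x + s ∈ K + P :=
    fun x hx s hs => Set.add_mem_add ⟨x, hx, rfl⟩ hs
  set x₀ : Fin n → ℝ := Pi.single (⟨0, hn⟩ : Fin n) 1 with hx₀def
  have hx₀ : x₀ ∈ stdSimplex ℝ (Fin n) := single_mem_stdSimplex ℝ _
  have hfx₀ : u < f (B.mulVecLin x₀) := by
    have := hC _ (hmemC x₀ hx₀ 0 (fun i => le_refl 0))
    simpa using this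
  have hynn : ∀ k, 0 ≤ y k := by
    intro k
    by_contra hk
    push_neg at hk
    have hbase : ∀ t : ℝ, 0 ≤ t → u < f (B.mulVecLin x₀) + t * y k := by
      intro t ht
      have hsP : (t • (Pi.single k (1 : ℝ) : Fin n → ℝ)) ∈ P := by
        intro i
        simp only [Pi.smul_apply, Pi.single_apply, smul_eq_mul, mul_ite, mul_one, mul_zero]
        split_ifs <;> simp [ht]
      have := hC _ (hmemC x₀ hx₀ _ hsP)
      rwa [map_add, map_smul, smul_eq_mul] at this
    have hden : (0 : ℝ) < -y k := by linarith
    have hnum : (0 : ℝ) < f (B.mulVecLin x₀) - u + 1 := by linarith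
    have ht : (0 : ℝ) ≤ (f (B.mulVecLin x₀) - u + 1) / (-y k) :=
      le_of_lt (div_pos hnum hden)
    have := hbase _ ht
    have hcalc : (f (B.mulVecLin x₀) - u + 1) / (-y k) * y k
        = -(f (B.mulVecLin x₀) - u + 1) := by
      field_simp
      rw [div_self hk.ne]
    rw [hcalc] at this
    linarith
  have hkey : ∀ x ∈ stdSimplex ℝ (Fin n), u < ∑ j, B.mulVec x j * y j := by
    intro x hx
    have := hC _ (hmemC x hx 0 (fun i => le_refl 0))
    rw [add_zero, hf] at this
    simpa [Matrix.mulVecLin_apply] using this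
  have hBy : ∀ k, u < B.mulVec y k := by
    intro k
    have := hkey (Pi.single k 1) (single_mem_stdSimplex ℝ k)
    have hrw : ∑ j, B.mulVec (Pi.single k (1 : ℝ)) j * y j = B.mulVec y k := by
      simp only [Matrix.mulVec_single, mul_one]
      simp only [Matrix.mulVec, dotProduct]
      refine Finset.sum_congr rfl fun j _ => ?_
      show B j k * 1 * y j = B k j * y j
      rw [mul_one, hB.apply]
    rwa [hrw] at this
  have hSpos : 0 < ∑ k, y k := by
    rcases lt_or_eq_of_le (Finset.sum_nonneg fun k _ => hynn k) with hS | hS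
    · exact hS
    · exfalso
      have hall : ∀ k ∈ Finset.univ, y k = 0 :=
        (Finset.sum_eq_zero_iff_of_nonneg fun k _ => hynn k).mp hS.symm
      have : B.mulVec y (⟨0, hn⟩ : Fin n) = 0 := by
        simp only [Matrix.mulVec, dotProduct]
        exact Finset.sum_eq_zero fun j hj => by rw [hall j (Finset.mem_univ j), mul_zero]
      have h2 := hBy (⟨0, hn⟩ : Fin n)
      rw [this] at h2
      linarith
  refine ⟨(∑ k, y k)⁻¹ • y, ?_, ?_, ?_⟩
  · intro i
    exact mul_nonneg (inv_nonneg.mpr (le_of_lt hSpos)) (hynn i)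
  · rw [Finset.sum_congr rfl fun i _ => (Pi.smul_apply _ _ _ : _ = (∑ k, y k)⁻¹ * y i),
      ← Finset.mul_sum, inv_mul_cancel₀ (ne_of_gt hSpos)]
  · intro k
    rw [Matrix.mulVec_smul]
    have : (0 : ℝ) < B.mulVec y k := lt_trans hfu (hBy k)
    simpa [smul_eq_mul] using mul_pos (inv_pos.mpr hSpos) this

/-- No two distinct values can both satisfy the minimax sandwich property. -/
private lemma mm_unique {n : ℕ} (hn : 1 ≤ n) (A : Matrix (Fin n) (Fin n) ℝ) (hA : A.IsSymm)
    {α β : ℝ}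
    (hα : ∀ x : Fin n → ℝ, (∀ i, 0 ≤ x i) → (∑ i, x i) = 1 →
      (⨅ i, A.mulVec x i) ≤ α ∧ α ≤ ⨆ i, A.mulVec x i)
    (hβ : ∀ x : Fin n → ℝ, (∀ i, 0 ≤ x i) → (∑ i, x i) = 1 →
      (⨅ i, A.mulVec x i) ≤ β ∧ β ≤ ⨆ i, A.mulVec x i)
    (hlt : α < β) : False := by
  haveI : Nonempty (Fin n) := Fin.pos_iff_nonempty.mp hn
  set c : ℝ := (α + β) / 2 with hcdef
  set B : Matrix (Fin n) (Fin n) ℝ := Matrix.of fun i j => A i j - c with hBdef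
  have hBsymm : B.IsSymm := by
    ext i j
    simp only [hBdef, Matrix.transpose_apply, Matrix.of_apply]
    rw [hA.apply]
  have hBx : ∀ x : Fin n → ℝ, (∑ i, x i) = 1 → ∀ i, B.mulVec x i = A.mulVec x i - c := by
    intro x hx i
    simp only [hBdef, Matrix.mulVec, dotProduct, Matrix.of_apply, sub_mul]
    rw [Finset.sum_sub_distrib, ← Finset.mul_sum, hx, mul_one]
  have hpos : ∀ x : Fin n → ℝ, (∀ i, 0 ≤ x i) → (∑ i, x i) = 1 →
      0 < ⨆ i, B.mulVec x i := by
    intro x h1 h2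
    obtain ⟨i₀, hi₀⟩ := exists_eq_ciSup_of_finite (f := fun i => A.mulVec x i)
    have h3 := (hβ x h1 h2).2
    rw [← hi₀] at h3
    have h4 : B.mulVec x i₀ ≤ ⨆ i, B.mulVec x i := le_ciSup (Finite.bddAbove_range _) i₀
    have h5 : B.mulVec x i₀ = A.mulVec x i₀ - c := hBx x h2 i₀
    have hc : c < β := by rw [hcdef]; linarith
    linarith
  obtain ⟨y, hy1, hy2, hy3⟩ := mm_sep hn B hBsymm hpos
  have h5 := (hα y hy1 hy2).1
  obtain ⟨k₀, hk₀⟩ := exists_eq_ciInf_of_finite (f := fun i => A.mulVec y i)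
  rw [← hk₀] at h5
  have h6 := hy3 k₀
  have h7 : B.mulVec y k₀ = A.mulVec y k₀ - c := hBx y hy2 k₀
  have hc' : α < c := by rw [hcdef]; linarith
  linarith

/-- von Neumann minimax theorem for symmetric matrices: there exists a unique
real number `α` (the value of the game) such that for every probability vector
`x` (nonnegative entries summing to 1), one has
`min_i (Ax)_i ≤ α ≤ max_i (Ax)_i`. -/
theorem minimax_symmetric (n : ℕ) (hn : 1 ≤ n)
    (A : Matrix (Fin n) (Fin n) ℝ) (hA : A.IsSymm) :
    ∃! α : ℝ, ∀ x : Fin n → ℝ, (∀ i, 0 ≤ x i) → (∑ i, x i) = 1 →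
      (⨅ i, A.mulVec x i) ≤ α ∧ α ≤ ⨆ i, A.mulVec x i := by
  haveI : Nonempty (Fin n) := Fin.pos_iff_nonempty.mp hn
  set S : Set ℝ :=
    {m | ∃ x : Fin n → ℝ, (∀ i, 0 ≤ x i) ∧ (∑ i, x i) = 1 ∧ m = ⨅ i, A.mulVec x i}
    with hSdef
  have hx₀ := single_mem_stdSimplex ℝ (⟨0, hn⟩ : Fin n)
  have hne : S.Nonempty :=
    ⟨_, Pi.single (⟨0, hn⟩ : Fin n) 1, hx₀.1, hx₀.2, rfl⟩
  have hweak : ∀ m ∈ S, ∀ x : Fin n → ℝ, (∀ i, 0 ≤ x i) → (∑ i, x i) = 1 →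
      m ≤ ⨆ i, A.mulVec x i := by
    rintro m ⟨z, hz1, hz2, rfl⟩ x h1 h2
    exact mm_weak hn A hA z x hz1 hz2 h1 h2
  have hbdd : BddAbove S :=
    ⟨⨆ i, A.mulVec (Pi.single (⟨0, hn⟩ : Fin n) 1) i,
      fun m hm => hweak m hm _ hx₀.1 hx₀.2⟩
  have hmain : ∀ x : Fin n → ℝ, (∀ i, 0 ≤ x i) → (∑ i, x i) = 1 →
      (⨅ i, A.mulVec x i) ≤ sSup S ∧ sSup S ≤ ⨆ i, A.mulVec x i := by
    intro x h1 h2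
    exact ⟨le_csSup hbdd ⟨x, h1, h2, rfl⟩,
      csSup_le hne fun m hm => hweak m hm x h1 h2⟩
  refine ⟨sSup S, hmain, ?_⟩
  intro β hβ
  by_contra hne'
  rcases lt_or_gt_of_ne hne' with h | h
  · exact mm_unique hn A hA hβ hmain h
  · exact mm_unique hn A hA hmain hβ h
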